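/- Let F be a field and let G be a skew-symmetric bipartite F*-graph with bipartition (A,B), and let M := M_F(G,A,B). For every X ⊆ A∪B, cutrk_G(X) = λ_M(X) − 1. Consequently, if |A∪B| ≥ 2 then lrw(G) = pw(M) − 1. -/

import Mathlib

open Classical

noncomputable section

/-- A bijection `σ : F → F` is a *sesqui-morphism* if it is an involution and
the map `x ↦ σ x / σ 1` is a field automorphism of `F`. -/
def IsSesquiMorphism {F : Type} [Field F] (σ : F → F) : Prop :=
  Function.Involutive σ ∧ ∃ φ : F ≃+* F, ∀ x, φ x = σ x / σ 1

/-- `M` is the adjacency matrix of a σ-symmetric F*-graph: zero diagonal and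
`M x y = σ (M y x)` for all `x, y`. -/
def IsSigmaSymmGraph {F V : Type} [Field F] (σ : F → F) (M : Matrix V V F) : Prop :=
  (∀ x, M x x = 0) ∧ ∀ x y, M x y = σ (M y x)

/-- Pivot complementation `G ∧ xy`. -/
def pivotComp {F V : Type} [Field F] (σ : F → F) (M : Matrix V V F) (x y : V) :
    Matrix V V F :=
  Matrix.of fun s u =>
    if s = u then 0
    else if s = x ∧ u = y then -1 / M y x
    else if s = y ∧ u = x then -(σ 1) ^ 2 / M x y
    else if s = x then M y u / M y x
    else if s = y then σ 1 * M x u / M x y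
    else if u = x then σ 1 * M s y / M x y
    else if u = y then M s x / M y x
    else M s u - M s x * M y u / M y x - M s y * M x u / M x y

/-- The cut-rank of `X`: the rank over `F` of the submatrix `M[X, Xᶜ]`. -/
def cutrk {F V : Type} [Field F] [Fintype V] (M : Matrix V V F) (X : Set V) : ℕ :=
  (Matrix.of fun (i : X) (j : (Xᶜ : Set V)) => M i j).rank

/-- The rank over `F` of the submatrix `M[X, Y]`. -/
def rkSub {F V : Type} [Field F] [Fintype V] (M : Matrix V V F) (X Y : Set V) : ℕ :=
  (Matrix.of fun (i : X) (j : Y) => M i j).rank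

/-- The width of a linear layout `π` (listing the vertices as positions `0, …, n-1`):
the maximum over `1 ≤ i ≤ n-1` of the cut-rank of the first `i` vertices. -/
def layoutWidth {F V : Type} [Field F] [Fintype V] (M : Matrix V V F)
    (π : V ≃ Fin (Fintype.card V)) : ℕ :=
  (Finset.Ico 1 (Fintype.card V)).sup fun i => cutrk M {v | (π v : ℕ) < i}

/-- The linear rank-width of `M`: the minimum width of a linear layout. -/
def lrw {F V : Type} [Field F] [Fintype V] (M : Matrix V V F) : ℕ :=
  ⨅ π : V ≃ Fin (Fintype.card V), layoutWidth M π

/-- `PivotEquiv σ G G'` holds if `G'` arises from `G` by a finite sequence of pivot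
complementations, each applied to an edge of the current graph. -/
inductive PivotEquiv {F V : Type} [Field F] (σ : F → F) :
    Matrix V V F → Matrix V V F → Prop
  | refl (M : Matrix V V F) : PivotEquiv σ M M
  | tail (M N : Matrix V V F) (x y : V) : x ≠ y → N x y ≠ 0 →
      PivotEquiv σ M N → PivotEquiv σ M (pivotComp σ N x y)

/-- `H` is a pivot-minor of `G`: `H` is simply isomorphic to an induced subgraph of
a graph pivot equivalent to `G`. -/
def IsPivotMinor {F V W : Type} [Field F] (σ : F → F)
    (H : Matrix W W F) (G : Matrix V V F) : Prop :=
  ∃ G' : Matrix V V F, PivotEquiv σ G G' ∧ ∃ h : W ↪ V, ∀ x y, H x y = G' (h x) (h y)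

end

open Classical

noncomputable section

/-- The rank of a set `X` in a matroid: the maximum size of an independent subset
of `X`. -/
def mrank {α : Type} [Fintype α] (M : Matroid α) (X : Set α) : ℕ :=
  (Finset.univ.powerset.filter fun I : Finset α => ↑I ⊆ X ∧ M.Indep ↑I).sup Finset.card

/-- The connectivity function `λ_M(X) = r(X) + r(E∖X) − r(E) + 1` of a matroid. -/
def matroidConn {α : Type} [Fintype α] (M : Matroid α) (X : Set α) : ℕ :=
  mrank M X + mrank M (M.E \ X) + 1 - mrank M M.E

/-- The path-width of a matroid: the minimum over linear layouts of the ground set of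
the maximum connectivity of a proper prefix. -/
def matroidPW {α : Type} [Fintype α] (M : Matroid α) : ℕ :=
  ⨅ π : ↥M.E ≃ Fin (Nat.card ↥M.E),
    (Finset.Ico 1 (Nat.card ↥M.E)).sup fun i =>
      matroidConn M {v | ∃ h : v ∈ M.E, ((π ⟨v, h⟩ : Fin (Nat.card ↥M.E)) : ℕ) < i}

/-- Deletion: `M ∖ X` is the restriction of `M` to `M.E ∖ X`. -/
def mdelete {α : Type} (M : Matroid α) (X : Set α) : Matroid α :=
  M.restrict (M.E \ X)

/-- Contraction: `M / X := (M✶ ∖ X)✶`. -/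
def mcontract {α : Type} (M : Matroid α) (X : Set α) : Matroid α :=
  (mdelete M✶ X)✶

/-- `N` is the column matroid of the matrix `A`: the ground set of `N` is all column
indices, and a set of columns is independent iff it is linearly independent over `F`. -/
def IsColMatroid {R E F : Type} [Field F] (N : Matroid E) (A : Matrix R E F) : Prop :=
  N.E = Set.univ ∧
    ∀ I : Set E, N.Indep I ↔ LinearIndependent F (fun i : I => fun r : R => A r i)

/-- The matrix `(I_A | M_G[A,B])` (with `B = Aᶜ`): rows indexed by `A`, columns by all
vertices; the column of `v ∈ A` is the standard basis vector at `v`, and the column of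
`v ∉ A` is `M_G[·, v]`. -/
def repMatrix {F V : Type} [Field F] (M : Matrix V V F) (A : Set V) :
    Matrix ↥A V F :=
  Matrix.of fun a v => if v ∈ A then (if (a : V) = v then 1 else 0) else M a v

/-- `M` is the adjacency matrix of a skew-symmetric bipartite F*-graph with bipartition
`(A, Aᶜ)`. -/
def IsSkewBipartite {F V : Type} [Field F] (M : Matrix V V F) (A : Set V) : Prop :=
  (∀ x, M x x = 0) ∧ (∀ x y, M x y = - M y x) ∧
    ∀ x y : V, ((x ∈ A ∧ y ∈ A) ∨ (x ∉ A ∧ y ∉ A)) → M x y = 0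

/-- Matroid isomorphism: a bijection between the ground sets preserving independence. -/
def MatroidIso {α β : Type} (N₁ : Matroid α) (N₂ : Matroid β) : Prop :=
  ∃ f : α → β, Set.BijOn f N₁.E N₂.E ∧ ∀ I ⊆ N₁.E, (N₁.Indep I ↔ N₂.Indep (f '' I))

end


section StatementTwelveHelpers

open Matrix Module Submodule

set_option linter.unusedSectionVars false

variable {F V : Type} [Field F] [Fintype V]

lemma helper_rank_nullity {M N : Type} [AddCommGroup M] [Module F M]
    [AddCommGroup N] [Module F N] [FiniteDimensional F M]
    (W : Submodule F M) (p : M →ₗ[F] N) :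
    Module.finrank F ↥(W.map p) + Module.finrank F ↥(W ⊓ LinearMap.ker p)
      = Module.finrank F ↥W := by
  have h := LinearMap.finrank_range_add_finrank_ker (p.comp W.subtype)
  rw [LinearMap.range_comp, Submodule.range_subtype, LinearMap.ker_comp] at h
  have hc : Submodule.comap W.subtype (LinearMap.ker p)
      = Submodule.comap W.subtype (W ⊓ LinearMap.ker p) := by
    rw [Submodule.comap_inf, Submodule.comap_subtype_self, top_inf_eq]
  rw [hc, (Submodule.comapSubtypeEquivOfLe
    (inf_le_left : W ⊓ LinearMap.ker p ≤ W)).finrank_eq] at h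
  exact h

lemma helper_span_zero {W : Type} [AddCommGroup W] [Module F W]
    (c : V → W) (S T : Set V) (h0 : ∀ v ∈ T, c v = 0) :
    Submodule.span F (c '' (S ∪ T)) = Submodule.span F (c '' S) := by
  rw [Set.image_union, Submodule.span_union,
    show Submodule.span F (c '' T) = ⊥ from Submodule.span_eq_bot.2
      (by rintro x ⟨v, hv, rfl⟩; exact h0 v hv), sup_bot_eq]

lemma helper_map_span {W W' : Type} [AddCommGroup W] [Module F W] [AddCommGroup W'] [Module F W']
    (p : W →ₗ[F] W') (c : V → W) (S : Set V) :
    (Submodule.span F (c '' S)).map p = Submodule.span F ((fun v => p (c v)) '' S) := by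
  rw [Submodule.map_span, Set.image_image]

lemma helper_card_split (A X : Set V) :
    Nat.card ↥(A ∩ X) + Nat.card ↥(A \ X) = Nat.card ↥A := by
  classical
  have e1 : ↥(A ∩ X) ≃ {a : ↥A // (↑a : V) ∈ X} :=
    (Equiv.subtypeSubtypeEquivSubtypeInter (· ∈ A) (· ∈ X)).symm
  have e2 : ↥(A \ X) ≃ {a : ↥A // ¬ (↑a : V) ∈ X} :=
    (Equiv.subtypeSubtypeEquivSubtypeInter (· ∈ A) (· ∉ X)).symm
  rw [Nat.card_eq_fintype_card, Nat.card_eq_fintype_card, Nat.card_eq_fintype_card,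
    Fintype.card_congr e1, Fintype.card_congr e2, Fintype.card_subtype_compl]
  have := Fintype.card_subtype_le (fun a : ↥A => (↑a : V) ∈ X)
  omega

lemma helper_mrank {α W : Type} [Fintype α] [AddCommGroup W] [Module F W]
    [FiniteDimensional F W] (c : α → W) (Y : Set α) (Mat : Matroid α)
    (hInd : ∀ I : Set α, Mat.Indep I ↔ LinearIndependent F (fun i : I => c i)) :
    mrank Mat Y = Module.finrank F ↥(Submodule.span F (c '' Y)) := by
  classical
  apply Nat.le_antisymm
  · apply Finset.sup_le
    intro I hI
    rw [Finset.mem_filter] at hI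
    obtain ⟨-, hIY, hind⟩ := hI
    rw [hInd] at hind
    have h1 : Module.finrank F ↥(Submodule.span F (Set.range fun i : ↥(↑I : Set α) => c ↑i))
        = Fintype.card ↥(↑I : Set α) := finrank_span_eq_card hind
    have h2 : Set.range (fun i : ↥(↑I : Set α) => c ↑i) = c '' (↑I : Set α) :=
      (Set.image_eq_range c _).symm
    have h3 : Fintype.card ↥(↑I : Set α) = I.card := by
      rw [Fintype.card_congr (Equiv.subtypeEquivRight (fun x => Finset.mem_coe))]
      exact Fintype.card_coe I
    rw [h2, h3] at h1
    rw [← h1]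
    exact Submodule.finrank_mono (Submodule.span_mono (Set.image_mono hIY))
  · obtain ⟨t, hty, hts, hli⟩ := exists_linearIndependent F (c '' Y)
    have htfin : t.Finite := (Set.toFinite (c '' Y)).subset hty
    haveI : Fintype t := htfin.fintype
    have hfr : Module.finrank F ↥(Submodule.span F (c '' Y)) = t.toFinset.card := by
      rw [← hts]; exact finrank_span_set_eq_card hli
    choose f hf1 hf2 using fun w : t => hty w.2
    have finj : Function.Injective f := by
      intro w w' h
      apply Subtype.ext
      rw [← hf2 w, ← hf2 w', h]
    set I : Finset α := (Set.toFinite (Set.range f)).toFinset with hIdef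
    have hIco : (↑I : Set α) = Set.range f := Set.Finite.coe_toFinset _
    have hmem : I ∈ Finset.univ.powerset.filter
        fun J : Finset α => ↑J ⊆ Y ∧ Mat.Indep ↑J := by
      rw [Finset.mem_filter]
      refine ⟨Finset.mem_powerset.2 (Finset.subset_univ I), ?_, ?_⟩
      · rw [hIco]; rintro x ⟨w, rfl⟩; exact hf1 w
      · rw [hInd]
        have hb : Function.Bijective (fun w : t => (⟨f w, by rw [hIco]; exact ⟨w, rfl⟩⟩ :
            ↥(↑I : Set α))) := by
          constructor
          · intro w w' h
            exact finj (congrArg Subtype.val h)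
          · rintro ⟨x, hx⟩
            rw [hIco] at hx
            obtain ⟨w, rfl⟩ := hx
            exact ⟨w, rfl⟩
        have hcomp : (fun i : ↥(↑I : Set α) => c ↑i) ∘ (Equiv.ofBijective _ hb)
            = (Subtype.val : t → W) := funext fun w => hf2 w
        exact (linearIndependent_equiv' (Equiv.ofBijective _ hb) hcomp).1 hli
    have hcard : t.toFinset.card ≤ I.card := by
      have h1 : I.card = Fintype.card ↥(Set.range f) := Set.Finite.card_toFinset _
      have h2 : t.toFinset.card = Fintype.card ↥t := Set.toFinset_card t
      have h3 : Fintype.card ↥t = Fintype.card ↥(Set.range f) :=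
        Fintype.card_congr (Equiv.ofInjective f finj)
      omega
    calc Module.finrank F ↥(Submodule.span F (c '' Y)) = t.toFinset.card := hfr
      _ ≤ I.card := hcard
      _ ≤ _ := Finset.le_sup hmem

lemma helper_rk (G : Matrix V V F) (A X : Set V) :
    Module.finrank F ↥(Submodule.span F ((fun v (a : ↥A) => repMatrix G A a v) '' X))
      = Nat.card ↥(A ∩ X)
        + Module.finrank F
            ↥(Submodule.span F ((fun v (i : ↥(A \ X)) => G ↑i v) '' (X \ A))) := by
  classical
  set c : V → (↥A → F) := fun v (a : ↥A) => repMatrix G A a v with hc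
  set p : (↥A → F) →ₗ[F] (↥(A \ X) → F) :=
    LinearMap.funLeft F F (fun i : ↥(A \ X) => (⟨↑i, i.2.1⟩ : ↥A)) with hp
  have hpc1 : ∀ v ∈ X \ A, p (c v) = fun i : ↥(A \ X) => G ↑i v := by
    intro v hv
    funext i
    simp only [hp, hc, LinearMap.funLeft_apply, repMatrix, Matrix.of_apply, if_neg hv.2]
  have hpc2 : ∀ v ∈ X ∩ A, p (c v) = 0 := by
    intro v hv
    funext i
    simp only [hp, hc, LinearMap.funLeft_apply, repMatrix, Matrix.of_apply, if_pos hv.2,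
      Pi.zero_apply]
    exact if_neg (fun h => i.2.2 (show (↑i : V) ∈ X by rw [h]; exact hv.1))
  have hW := helper_rank_nullity (F := F) (Submodule.span F (c '' X)) p
  have hmap : (Submodule.span F (c '' X)).map p
      = Submodule.span F ((fun v (i : ↥(A \ X)) => G ↑i v) '' (X \ A)) := by
    calc (Submodule.span F (c '' X)).map p
        = Submodule.span F ((fun v => p (c v)) '' ((X \ A) ∪ (X ∩ A))) := by
          rw [Set.diff_union_inter, helper_map_span]
      _ = Submodule.span F ((fun v => p (c v)) '' (X \ A)) :=
          helper_span_zero _ _ _ (fun v hv => hpc2 v hv)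
      _ = Submodule.span F ((fun v (i : ↥(A \ X)) => G ↑i v) '' (X \ A)) :=
          congrArg _ (Set.image_congr hpc1)
  have hker : Submodule.span F (c '' X) ⊓ LinearMap.ker p = LinearMap.ker p := by
    rw [inf_eq_right]
    intro g hg
    have hg' : ∀ a : ↥A, (↑a : V) ∉ X → g a = 0 := by
      intro a ha
      have := congrFun (LinearMap.mem_ker.1 hg) ⟨↑a, ⟨a.2, ha⟩⟩
      simpa [hp, LinearMap.funLeft_apply] using this
    have hrepr : g = ∑ a : ↥A, g a • c ↑a := by
      funext a'
      have hterm : ∀ a : ↥A, g a • c ↑a a' = if a' = a then g a else 0 := by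
        intro a
        simp only [hc, repMatrix, Matrix.of_apply, if_pos a.2, smul_eq_mul, mul_ite,
          mul_one, mul_zero]
        congr 1
        simp [Subtype.ext_iff]
      rw [Finset.sum_apply]
      simp only [Pi.smul_apply]
      rw [Finset.sum_congr rfl (fun a _ => hterm a), Finset.sum_ite_eq]
      simp
    rw [hrepr]
    apply Submodule.sum_mem
    intro a _
    by_cases hx : (↑a : V) ∈ X
    · exact Submodule.smul_mem _ _ (Submodule.subset_span ⟨↑a, hx, rfl⟩)
    · rw [hg' a hx, zero_smul]; exact Submodule.zero_mem _
  have hkerdim : Module.finrank F ↥(LinearMap.ker p) = Nat.card ↥(A ∩ X) := by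
    have hsurj : Function.Surjective p :=
      LinearMap.funLeft_surjective_of_injective F F _
        (fun i j h => Subtype.coe_injective (congrArg (Subtype.val : ↥A → V) h))
    have h1 := LinearMap.finrank_range_add_finrank_ker p
    rw [LinearMap.range_eq_top.2 hsurj, finrank_top, Module.finrank_pi, Module.finrank_pi] at h1
    have h2 := helper_card_split A X
    rw [Nat.card_eq_fintype_card, Nat.card_eq_fintype_card, Nat.card_eq_fintype_card] at h2
    rw [Nat.card_eq_fintype_card]
    omega
  rw [hmap, hker, hkerdim] at hW
  omega

lemma helper_rk_univ (G : Matrix V V F) (A : Set V) :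
    Module.finrank F
        ↥(Submodule.span F ((fun v (a : ↥A) => repMatrix G A a v) '' Set.univ))
      = Nat.card ↥A := by
  classical
  set c : V → (↥A → F) := fun v (a : ↥A) => repMatrix G A a v with hc
  have hbasis : ∀ a : ↥A, c ↑a = Pi.basisFun F ↥A a := by
    intro a
    funext a'
    simp only [hc, repMatrix, Matrix.of_apply, if_pos a.2, Pi.basisFun_apply]
    rw [Pi.single_apply]
    congr 1
    simp [Subtype.ext_iff, eq_comm]
  have htop : Submodule.span F (c '' Set.univ) = ⊤ := by
    rw [eq_top_iff, ← (Pi.basisFun F ↥A).span_eq]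
    apply Submodule.span_mono
    rintro x ⟨a, rfl⟩
    exact ⟨↑a, trivial, hbasis a⟩
  rw [htop, finrank_top, Module.finrank_pi, Nat.card_eq_fintype_card]

lemma helper_grk_rank (G : Matrix V V F) (R C : Set V) :
    (Matrix.of fun (i : ↥R) (j : ↥C) => G ↑i ↑j).rank
      = Module.finrank F ↥(Submodule.span F ((fun v (i : ↥R) => G ↑i v) '' C)) := by
  have h : ((fun v (i : ↥R) => G ↑i v) '' C)
      = Set.range (Matrix.of fun (i : ↥R) (j : ↥C) => G ↑i ↑j)ᵀ := by
    rw [Set.image_eq_range]; rfl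
  rw [Matrix.rank_eq_finrank_span_cols, h]
  rfl

lemma helper_rank_neg {m n : Type} [Fintype n] (B : Matrix m n F) : (-B).rank = B.rank := by
  rw [Matrix.rank_eq_finrank_span_cols, Matrix.rank_eq_finrank_span_cols]
  have h : Submodule.span F (Set.range (-B)ᵀ) = Submodule.span F (Set.range Bᵀ) := by
    apply le_antisymm <;> rw [Submodule.span_le] <;> rintro x ⟨j, rfl⟩
    · have h2 : (-B)ᵀ j = -(Bᵀ j) := by funext i; simp
      rw [h2]
      exact Submodule.neg_mem _ (Submodule.subset_span ⟨j, rfl⟩)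
    · have h2 : Bᵀ j = -((-B)ᵀ j) := by funext i; simp
      rw [h2]
      exact Submodule.neg_mem _ (Submodule.subset_span ⟨j, rfl⟩)
  exact congrArg (fun S : Submodule F (m → F) => Module.finrank F ↥S) h

lemma helper_grk_symm (G : Matrix V V F) (hskew : ∀ x y, G x y = - G y x) (R C : Set V) :
    Module.finrank F ↥(Submodule.span F ((fun v (i : ↥R) => G ↑i v) '' C))
      = Module.finrank F ↥(Submodule.span F ((fun v (i : ↥C) => G ↑i v) '' R)) := by
  rw [← helper_grk_rank G R C, ← helper_grk_rank G C R]
  have h : (Matrix.of fun (i : ↥C) (j : ↥R) => G ↑i ↑j)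
      = -((Matrix.of fun (i : ↥R) (j : ↥C) => G ↑i ↑j)ᵀ) := by
    ext i j
    simp only [Matrix.neg_apply, Matrix.transpose_apply, Matrix.of_apply]
    exact hskew _ _
  rw [h, helper_rank_neg, Matrix.rank_transpose]

lemma helper_cutrk_span (G : Matrix V V F) (X : Set V) :
    cutrk G X
      = Module.finrank F ↥(Submodule.span F ((fun v (i : ↥X) => G ↑i v) '' (Xᶜ : Set V))) := by
  unfold cutrk
  have h : ((fun v (i : ↥X) => G ↑i v) '' (Xᶜ : Set V))
      = Set.range (Matrix.of fun (i : ↥X) (j : ↥(Xᶜ : Set V)) => G ↑i ↑j)ᵀ := by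
    rw [Set.image_eq_range]; rfl
  rw [Matrix.rank_eq_finrank_span_cols, h]
  rfl

lemma helper_cutrk (G : Matrix V V F) (A X : Set V)
    (hbipA : ∀ x y, x ∈ A → y ∈ A → G x y = 0)
    (hbipB : ∀ x y, x ∉ A → y ∉ A → G x y = 0) :
    Module.finrank F ↥(Submodule.span F ((fun v (i : ↥X) => G ↑i v) '' (Xᶜ : Set V)))
      = Module.finrank F
          ↥(Submodule.span F ((fun v (i : ↥(A ∩ X)) => G ↑i v) '' (Xᶜ \ A)))
        + Module.finrank F
            ↥(Submodule.span F ((fun v (i : ↥(X \ A)) => G ↑i v) '' (Xᶜ ∩ A))) := by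
  classical
  set dX : V → (↥X → F) := fun v (i : ↥X) => G ↑i v with hdX
  set p₂ : (↥X → F) →ₗ[F] (↥(A ∩ X) → F) :=
    LinearMap.funLeft F F (fun i : ↥(A ∩ X) => (⟨↑i, i.2.2⟩ : ↥X)) with hp₂
  set q : (↥X → F) →ₗ[F] (↥(X \ A) → F) :=
    LinearMap.funLeft F F (fun i : ↥(X \ A) => (⟨↑i, i.2.1⟩ : ↥X)) with hq
  have h2 : ∀ v ∈ (Xᶜ : Set V) ∩ A, p₂ (dX v) = 0 := by
    intro v hv; funext i
    exact hbipA _ _ i.2.1 hv.2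
  have h3 : ∀ v ∈ (Xᶜ : Set V) \ A, q (dX v) = 0 := by
    intro v hv; funext i
    exact hbipB _ _ i.2.2 hv.2
  have hzero : ∀ w : ↥X → F, w ∈ LinearMap.ker p₂ → w ∈ LinearMap.ker q → w = 0 := by
    intro w hw1 hw2
    funext i
    by_cases hiA : (↑i : V) ∈ A
    · exact congrFun (LinearMap.mem_ker.1 hw1) ⟨↑i, ⟨hiA, i.2⟩⟩
    · exact congrFun (LinearMap.mem_ker.1 hw2) ⟨↑i, ⟨i.2, hiA⟩⟩
  have hWrn := helper_rank_nullity (F := F) (Submodule.span F (dX '' (Xᶜ : Set V))) p₂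
  have hmap : (Submodule.span F (dX '' (Xᶜ : Set V))).map p₂
      = Submodule.span F ((fun v (i : ↥(A ∩ X)) => G ↑i v) '' (Xᶜ \ A)) := by
    calc (Submodule.span F (dX '' (Xᶜ : Set V))).map p₂
        = Submodule.span F ((fun v => p₂ (dX v)) '' ((Xᶜ \ A) ∪ ((Xᶜ : Set V) ∩ A))) := by
          rw [Set.diff_union_inter, helper_map_span]
      _ = Submodule.span F ((fun v => p₂ (dX v)) '' (Xᶜ \ A)) :=
          helper_span_zero _ _ _ h2
      _ = Submodule.span F ((fun v (i : ↥(A ∩ X)) => G ↑i v) '' (Xᶜ \ A)) := rfl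
  have hker : Submodule.span F (dX '' (Xᶜ : Set V)) ⊓ LinearMap.ker p₂
      = Submodule.span F (dX '' ((Xᶜ : Set V) ∩ A)) := by
    apply le_antisymm
    · intro w hw
      obtain ⟨hwW, hwk⟩ := Submodule.mem_inf.1 hw
      have hsplit : Submodule.span F (dX '' (Xᶜ : Set V))
          = Submodule.span F (dX '' ((Xᶜ : Set V) ∩ A))
            ⊔ Submodule.span F (dX '' (Xᶜ \ A)) := by
        rw [← Submodule.span_union, ← Set.image_union, Set.inter_union_diff]
      rw [hsplit] at hwW
      obtain ⟨w₁, hw₁, w₂, hw₂, rfl⟩ := Submodule.mem_sup.1 hwW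
      have hw₁k : w₁ ∈ LinearMap.ker p₂ :=
        Submodule.span_le.2 (by rintro x ⟨v, hv, rfl⟩; exact LinearMap.mem_ker.2 (h2 v hv)) hw₁
      have hw₂k : w₂ ∈ LinearMap.ker p₂ := by
        have := LinearMap.mem_ker.1 hwk
        rw [map_add, LinearMap.mem_ker.1 hw₁k, zero_add] at this
        exact LinearMap.mem_ker.2 this
      have hw₂q : w₂ ∈ LinearMap.ker q :=
        Submodule.span_le.2 (by rintro x ⟨v, hv, rfl⟩; exact LinearMap.mem_ker.2 (h3 v hv)) hw₂
      rw [hzero w₂ hw₂k hw₂q, add_zero]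
      exact hw₁
    · refine le_inf (Submodule.span_mono (Set.image_mono (f := dX) Set.inter_subset_left))
        (Submodule.span_le.2 ?_)
      rintro x ⟨v, hv, rfl⟩
      exact LinearMap.mem_ker.2 (h2 v hv)
  have hlast : Module.finrank F ↥(Submodule.span F (dX '' ((Xᶜ : Set V) ∩ A)))
      = Module.finrank F
          ↥(Submodule.span F ((fun v (i : ↥(X \ A)) => G ↑i v) '' ((Xᶜ : Set V) ∩ A))) := by
    have hrn := helper_rank_nullity (F := F)
      (Submodule.span F (dX '' ((Xᶜ : Set V) ∩ A))) q
    have hmap2 : (Submodule.span F (dX '' ((Xᶜ : Set V) ∩ A))).map q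
        = Submodule.span F ((fun v (i : ↥(X \ A)) => G ↑i v) '' ((Xᶜ : Set V) ∩ A)) := by
      rw [helper_map_span]; rfl
    have hbot : Submodule.span F (dX '' ((Xᶜ : Set V) ∩ A)) ⊓ LinearMap.ker q = ⊥ := by
      rw [eq_bot_iff]
      intro w hw
      obtain ⟨hwW, hwq⟩ := Submodule.mem_inf.1 hw
      have hwp : w ∈ LinearMap.ker p₂ :=
        Submodule.span_le.2 (by rintro x ⟨v, hv, rfl⟩; exact LinearMap.mem_ker.2 (h2 v hv)) hwW
      simp [hzero w hwp hwq]
    rw [hmap2, hbot] at hrn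
    simpa using hrn.symm
  rw [hmap, hker, hlast] at hWrn
  omega

lemma helper_iInf_add_one {ι : Type} [Nonempty ι] (f : ι → ℕ) :
    ⨅ i, (f i + 1) = (⨅ i, f i) + 1 := by
  have h : (⨅ i, f i) ∈ Set.range f := by
    rw [iInf]; exact Nat.sInf_mem (Set.range_nonempty f)
  obtain ⟨i0, hi0⟩ := h
  apply le_antisymm
  · calc ⨅ i, (f i + 1) ≤ f i0 + 1 := ciInf_le (OrderBot.bddBelow _) i0
      _ = (⨅ i, f i) + 1 := by rw [hi0]
  · exact le_ciInf fun i => Nat.add_le_add_right (ciInf_le (OrderBot.bddBelow _) i) 1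

lemma helper_sup_add_one {ι : Type} (s : Finset ι) (hs : s.Nonempty) (f : ι → ℕ) :
    (s.sup fun i => f i + 1) = s.sup f + 1 := by
  rw [← Finset.sup'_eq_sup hs, ← Finset.sup'_eq_sup hs]
  exact (Finset.comp_sup'_eq_sup'_comp hs (fun x => x + 1) (fun x y => by
    show max x y + 1 = max (x + 1) (y + 1); omega)).symm

end StatementTwelveHelpers

/-- For a skew-symmetric bipartite F*-graph `G` with bipartition
`(A, Aᶜ)` and `M := M_F(G, A, Aᶜ)`: for every set `X` of vertices,
`cutrk_G(X) = λ_M(X) − 1`; consequently, if there are at least two vertices then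
`lrw(G) = pw(M) − 1`. -/
theorem fundamental_graph_conn_and_pathwidth {F V : Type} [Field F] [Fintype V]
    (G : Matrix V V F) (A : Set V) (hG : IsSkewBipartite G A)
    (M : Matroid V) (hM : IsColMatroid M (repMatrix G A)) :
    (∀ X : Set V, cutrk G X + 1 = matroidConn M X) ∧
    (2 ≤ Fintype.card V → lrw G + 1 = matroidPW M) := by
  classical
  obtain ⟨hdiag, hskew, hbip⟩ := hG
  obtain ⟨hE, hInd⟩ := hM
  have hbipA : ∀ x y, x ∈ A → y ∈ A → G x y = 0 := fun x y hx hy => hbip x y (Or.inl ⟨hx, hy⟩)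
  have hbipB : ∀ x y, x ∉ A → y ∉ A → G x y = 0 := fun x y hx hy => hbip x y (Or.inr ⟨hx, hy⟩)
  set c : V → (↥A → F) := fun v (a : ↥A) => repMatrix G A a v with hc
  have hmr : ∀ Y : Set V, mrank M Y = Module.finrank F ↥(Submodule.span F (c '' Y)) := by
    intro Y
    exact helper_mrank c Y M hInd
  have hconn : ∀ X : Set V, cutrk G X + 1 = matroidConn M X := by
    intro X
    have h1 := helper_rk G A X
    have h2 := helper_rk G A Xᶜ
    rw [show A ∩ Xᶜ = A \ X by rw [Set.diff_eq],
        show A \ Xᶜ = A ∩ X by rw [Set.diff_compl]] at h2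
    have h3 := (helper_cutrk_span G X).trans (helper_cutrk G A X hbipA hbipB)
    rw [helper_grk_symm G hskew (X \ A) (Xᶜ ∩ A),
        show (Xᶜ : Set V) ∩ A = A \ X by rw [Set.inter_comm, ← Set.diff_eq]] at h3
    have h4 := helper_card_split A X
    have h5 := helper_rk_univ G A
    unfold matroidConn
    rw [hE, ← Set.compl_eq_univ_diff, hmr X, hmr Xᶜ, hmr Set.univ]
    rw [h1, h2, h3, h5]
    omega
  refine ⟨hconn, ?_⟩
  intro hcard
  have hEcard : Nat.card ↥M.E = Fintype.card V := by
    rw [hE]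
    rw [Nat.card_congr (Equiv.Set.univ V)]
    exact Nat.card_eq_fintype_card
  set n := Fintype.card V with hn
  set e : ↥M.E ≃ V := (Equiv.setCongr hE).trans (Equiv.Set.univ V) with he
  set Φ : (V ≃ Fin n) ≃ (↥M.E ≃ Fin (Nat.card ↥M.E)) :=
    Equiv.equivCongr e.symm (finCongr hEcard.symm) with hΦ
  have hIco : Finset.Ico 1 (Nat.card ↥M.E) = Finset.Ico 1 n := by rw [hEcard]
  have hstep : ∀ π : V ≃ Fin n,
      ((Finset.Ico 1 (Nat.card ↥M.E)).sup fun i =>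
        matroidConn M {v | ∃ h : v ∈ M.E, ((Φ π ⟨v, h⟩ : Fin (Nat.card ↥M.E)) : ℕ) < i})
      = layoutWidth G π + 1 := by
    intro π
    have hset : ∀ i : ℕ,
        {v | ∃ h : v ∈ M.E, ((Φ π ⟨v, h⟩ : Fin (Nat.card ↥M.E)) : ℕ) < i}
          = {v | (π v : ℕ) < i} := by
      intro i
      ext v
      simp only [Set.mem_setOf_eq]
      constructor
      · rintro ⟨h, hlt⟩
        exact hlt
      · intro hlt
        refine ⟨by rw [hE]; trivial, ?_⟩
        exact hlt
    rw [hIco]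
    have hne : (Finset.Ico 1 n).Nonempty := by
      rw [Finset.nonempty_Ico]
      omega
    calc ((Finset.Ico 1 n).sup fun i =>
            matroidConn M {v | ∃ h : v ∈ M.E, ((Φ π ⟨v, h⟩ : Fin (Nat.card ↥M.E)) : ℕ) < i})
        = (Finset.Ico 1 n).sup fun i => cutrk G {v | (π v : ℕ) < i} + 1 :=
          Finset.sup_congr rfl (fun i _ => by rw [hset i, ← hconn])
      _ = ((Finset.Ico 1 n).sup fun i => cutrk G {v | (π v : ℕ) < i}) + 1 :=
          helper_sup_add_one _ hne _
      _ = layoutWidth G π + 1 := rfl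
  have hrange : (Set.range fun π' : ↥M.E ≃ Fin (Nat.card ↥M.E) =>
      (Finset.Ico 1 (Nat.card ↥M.E)).sup fun i =>
        matroidConn M {v | ∃ h : v ∈ M.E, ((π' ⟨v, h⟩ : Fin (Nat.card ↥M.E)) : ℕ) < i})
      = Set.range fun π : V ≃ Fin n =>
      (Finset.Ico 1 (Nat.card ↥M.E)).sup fun i =>
        matroidConn M {v | ∃ h : v ∈ M.E, ((Φ π ⟨v, h⟩ : Fin (Nat.card ↥M.E)) : ℕ) < i} := by
    ext x
    constructor
    · rintro ⟨π', rfl⟩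
      exact ⟨Φ.symm π', by dsimp only; rw [Equiv.apply_symm_apply]⟩
    · rintro ⟨π, rfl⟩
      exact ⟨Φ π, rfl⟩
  have hne2 : Nonempty (V ≃ Fin n) := ⟨Fintype.equivFin V⟩
  have hPW : matroidPW M = ⨅ π : V ≃ Fin n, (layoutWidth G π + 1) := by
    unfold matroidPW
    rw [iInf, hrange, ← iInf]
    exact congrArg _ (funext hstep)
  rw [hPW, helper_iInf_add_one]
  rfl
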